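/- Let N be a positive integer, let V_1, …, V_N be finite sets with disjoint union V, and let K be a positive integer. Let Y be a binary matrix with rows indexed by V and columns indexed by {1,…,K} such that every row of Y has exactly one nonzero entry and, for each i, the submatrix Y_i of rows indexed by V_i has at most one nonzero entry in each column. Set X = Y Yᵀ. Then X is positive semidefinite, all entries of X lie in {0,1}, the diagonal block X_{ii} (rows and columns indexed by V_i) is the identity matrix for every i, and every row sum and every column sum of each off-diagonal block X_{ij} (i ≠ j) is at most 1. -/

import Mathlib

open Matrix

/-- Converse direction of Proposition 1: a binary cluster-indicator matrix `Y`
(each row has exactly one nonzero entry, and within each block of rows `V i`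
each column has at most one nonzero entry) gives via `X = Y * Yᵀ` a PSD binary
matrix with identity diagonal blocks and doubly substochastic off-diagonal
blocks. -/
theorem indicator_gram_satisfies_constraints
    (N : ℕ) (hN : 0 < N) (V : Fin N → Type) [∀ i, Fintype (V i)]
    [∀ i, DecidableEq (V i)]
    (K : ℕ) (hK : 0 < K)
    (Y : Matrix ((i : Fin N) × V i) (Fin K) ℝ)
    (hYbin : ∀ u k, Y u k = 0 ∨ Y u k = 1)
    (hYrow : ∀ u : (i : Fin N) × V i, ∃! k, Y u k = 1)
    (hYcol : ∀ (i : Fin N) (k : Fin K) (u v : V i),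
      Y ⟨i, u⟩ k = 1 → Y ⟨i, v⟩ k = 1 → u = v) :
    (Y * Yᵀ).PosSemidef ∧
    (∀ u v, (Y * Yᵀ) u v = 0 ∨ (Y * Yᵀ) u v = 1) ∧
    (∀ (i : Fin N) (u v : V i), (Y * Yᵀ) ⟨i, u⟩ ⟨i, v⟩ = if u = v then 1 else 0) ∧
    (∀ (i j : Fin N), i ≠ j → ∀ u : V i, ∑ v : V j, (Y * Yᵀ) ⟨i, u⟩ ⟨j, v⟩ ≤ 1) ∧
    (∀ (i j : Fin N), i ≠ j → ∀ v : V j, ∑ u : V i, (Y * Yᵀ) ⟨i, u⟩ ⟨j, v⟩ ≤ 1) := by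
  classical
  -- the unique column where row u equals 1
  set f : ((i : Fin N) × V i) → Fin K := fun u => (hYrow u).choose with hf
  have hf1 : ∀ u, Y u (f u) = 1 := fun u => (hYrow u).choose_spec.1
  have hf0 : ∀ u k, k ≠ f u → Y u k = 0 := by
    intro u k hk
    rcases hYbin u k with h | h
    · exact h
    · exact absurd ((hYrow u).choose_spec.2 k h) hk
  have key : ∀ u v, (Y * Yᵀ) u v = Y v (f u) := by
    intro u v
    rw [mul_apply]
    rw [Finset.sum_eq_single (f u)]
    · simp [hf1]
    · intro k _ hk
      rw [hf0 u k hk, zero_mul]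
    · simp
  have key' : ∀ u v, (Y * Yᵀ) u v = Y u (f v) := by
    intro u v
    rw [mul_apply]
    rw [Finset.sum_eq_single (f v)]
    · simp [hf1]
    · intro k _ hk
      rw [Matrix.transpose_apply, hf0 v k hk, mul_zero]
    · simp
  refine ⟨?_, fun u v => (key u v) ▸ hYbin v (f u), ?_, ?_, ?_⟩
  · have := Matrix.posSemidef_self_mul_conjTranspose Y
    simpa only [Matrix.conjTranspose_eq_transpose_of_trivial] using this
  · intro i u v
    rw [key]
    by_cases huv : u = v
    · simp [huv, hf1]
    · simp only [huv, if_false]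
      rcases hYbin ⟨i, v⟩ (f ⟨i, u⟩) with h | h
      · exact h
      · exact absurd (hYcol i (f ⟨i, u⟩) u v (hf1 _) h) huv
  · intro i j _ u
    simp only [key]
    by_cases hex : ∃ v : V j, Y ⟨j, v⟩ (f ⟨i, u⟩) = 1
    · obtain ⟨v₀, hv₀⟩ := hex
      rw [Finset.sum_eq_single v₀]
      · rw [hv₀]
      · intro w _ hw
        rcases hYbin ⟨j, w⟩ (f ⟨i, u⟩) with h | h
        · exact h
        · exact absurd (hYcol j (f ⟨i, u⟩) w v₀ h hv₀) hw
      · simp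
    · push_neg at hex
      have : ∀ v : V j, Y ⟨j, v⟩ (f ⟨i, u⟩) = 0 := fun v =>
        (hYbin ⟨j, v⟩ _).resolve_right (hex v)
      simp [this]
  · intro i j _ v
    simp only [key']
    by_cases hex : ∃ u : V i, Y ⟨i, u⟩ (f ⟨j, v⟩) = 1
    · obtain ⟨u₀, hu₀⟩ := hex
      rw [Finset.sum_eq_single u₀]
      · rw [hu₀]
      · intro w _ hw
        rcases hYbin ⟨i, w⟩ (f ⟨j, v⟩) with h | h
        · exact h
        · exact absurd (hYcol i (f ⟨j, v⟩) w u₀ h hu₀) hw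
      · simp
    · push_neg at hex
      have : ∀ u : V i, Y ⟨i, u⟩ (f ⟨j, v⟩) = 0 := fun u =>
        (hYbin ⟨i, u⟩ _).resolve_right (hex u)
      simp [this]
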